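/- For every n, the function h₃(x) = π²‖x‖² − Σ_{i=1}^n sin²(π xᵢ) is convex on ℝⁿ. Hence p₃ = g₃ − h₃ is a difference of two convex functions, where g₃(x) = π²‖x‖². -/

import Mathlib

open Real

lemma hasDeriv1 (t : ℝ) :
    HasDerivAt (fun t : ℝ => π ^ 2 * t ^ 2 - Real.sin (π * t) ^ 2)
      (2 * π ^ 2 * t - π * Real.sin (2 * (π * t))) t := by
  have h1 : HasDerivAt (fun t : ℝ => π ^ 2 * t ^ 2) (π ^ 2 * (2 * t)) t := by
    simpa using ((hasDerivAt_pow 2 t).const_mul (π ^ 2))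
  have h2 : HasDerivAt (fun t : ℝ => Real.sin (π * t) ^ 2)
      (2 * Real.sin (π * t) * (Real.cos (π * t) * π)) t := by
    have hs : HasDerivAt (fun t : ℝ => Real.sin (π * t)) (Real.cos (π * t) * π) t := by
      simpa [Function.comp_def] using (Real.hasDerivAt_sin (π * t)).comp t ((hasDerivAt_id t).const_mul π)
    simpa [mul_comm] using hs.fun_pow 2
  have := h1.fun_sub h2
  exact this.congr_deriv (by rw [Real.sin_two_mul]; ring)

lemma hasDeriv2 (t : ℝ) :
    HasDerivAt (fun t : ℝ => 2 * π ^ 2 * t - π * Real.sin (2 * (π * t)))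
      (2 * π ^ 2 - 2 * π ^ 2 * Real.cos (2 * (π * t))) t := by
  have h1 : HasDerivAt (fun t : ℝ => 2 * π ^ 2 * t) (2 * π ^ 2) t := by
    simpa using (hasDerivAt_id t).const_mul (2 * π ^ 2)
  have h2 : HasDerivAt (fun t : ℝ => π * Real.sin (2 * (π * t)))
      (π * (Real.cos (2 * (π * t)) * (2 * π))) t := by
    have : HasDerivAt (fun t : ℝ => Real.sin (2 * (π * t))) (Real.cos (2 * (π * t)) * (2 * π)) t := by
      have hl : HasDerivAt (fun t : ℝ => 2 * (π * t)) (2 * π) t := by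
        simpa [mul_assoc] using (hasDerivAt_id t).const_mul (2 * π)
      simpa [Function.comp_def] using (Real.hasDerivAt_sin (2 * (π * t))).comp t hl
    exact this.const_mul π
  have := h1.fun_sub h2
  exact this.congr_deriv (by ring)

lemma convex1d : ConvexOn ℝ Set.univ (fun t : ℝ => π ^ 2 * t ^ 2 - Real.sin (π * t) ^ 2) := by
  have hd : deriv (fun t : ℝ => π ^ 2 * t ^ 2 - Real.sin (π * t) ^ 2)
      = fun t => 2 * π ^ 2 * t - π * Real.sin (2 * (π * t)) := by
    funext t; exact (hasDeriv1 t).deriv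
  apply convexOn_univ_of_deriv2_nonneg
  · exact fun t => (hasDeriv1 t).differentiableAt
  · rw [hd]; exact fun t => (hasDeriv2 t).differentiableAt
  · intro t
    have : deriv^[2] (fun t : ℝ => π ^ 2 * t ^ 2 - Real.sin (π * t) ^ 2) t
        = 2 * π ^ 2 - 2 * π ^ 2 * Real.cos (2 * (π * t)) := by
      simp only [Function.iterate_succ, Function.iterate_zero, Function.comp_apply, id]
      rw [hd]; exact (hasDeriv2 t).deriv
    rw [this]
    nlinarith [Real.cos_le_one (2 * (π * t)), sq_nonneg π, Real.pi_pos]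

lemma norm_sq_eq (n : ℕ) (x : EuclideanSpace ℝ (Fin n)) : ‖x‖ ^ 2 = ∑ i, x i ^ 2 := by
  rw [EuclideanSpace.norm_eq, Real.sq_sqrt (by positivity)]
  simp [sq_abs]

theorem stmt_5 (n : ℕ) :
    ConvexOn ℝ Set.univ
      (fun x : EuclideanSpace ℝ (Fin n) => π ^ 2 * ‖x‖ ^ 2 - ∑ i, Real.sin (π * x i) ^ 2) ∧
    ConvexOn ℝ Set.univ (fun x : EuclideanSpace ℝ (Fin n) => π ^ 2 * ‖x‖ ^ 2) ∧
    ∀ x : EuclideanSpace ℝ (Fin n),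
      (∑ i, Real.sin (π * x i) ^ 2) =
        (π ^ 2 * ‖x‖ ^ 2) - (π ^ 2 * ‖x‖ ^ 2 - ∑ i, Real.sin (π * x i) ^ 2) := by
  have key : ∀ (f : ℝ → ℝ), ConvexOn ℝ Set.univ f →
      ConvexOn ℝ Set.univ (fun x : EuclideanSpace ℝ (Fin n) => ∑ i, f (x i)) := by
    intro f hf
    have : ∀ i : Fin n, ConvexOn ℝ Set.univ (fun x : EuclideanSpace ℝ (Fin n) => f (x i)) := by
      intro i
      have := hf.comp_affineMap ((EuclideanSpace.proj i : EuclideanSpace ℝ (Fin n) →L[ℝ] ℝ).toLinearMap.toAffineMap)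
      simpa [Function.comp_def] using this
    classical
    induction (Finset.univ : Finset (Fin n)) using Finset.induction with
    | empty => simpa using convexOn_const 0 convex_univ
    | insert _ _ hnotmem ih =>
        simp only [Finset.sum_insert hnotmem]
        exact (this _).add ih
  refine ⟨?_, ?_, fun x => by ring⟩
  · have h := key _ convex1d
    convert h using 2 with x
    rw [norm_sq_eq, Finset.mul_sum, ← Finset.sum_sub_distrib]
  · have h := key (fun t => π ^ 2 * t ^ 2) ((Even.convexOn_pow (by norm_num)).smul (by positivity))
    convert h using 2 with x
    rw [norm_sq_eq, Finset.mul_sum]
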